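/- For all H₁ and H₂: D₁ ∘ D₂ = 0, and the homology dimensions of the product complex are given by the Künneth formula: dim(ker D₂) = (n₁ − r₁)(n₂ − r₂); dim(ker D₁ / range D₂) = (n₁ − r₁)(m₂ − r₂) + (m₁ − r₁)(n₂ − r₂); and dim(Matrix (Fin m₁) (Fin m₂) 𝔽₂ / range D₁) = (m₁ − r₁)(m₂ − r₂). In particular the middle formula is the number of logical qubits of the 2D hypergraph-product code, so hypergraph products of classical codes of linear dimension have constant encoding rate (the dimension count via the Künneth formula underlying Lemmas 5, 6 and 12). -/

import Mathlib

noncomputable section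

open Matrix

/-- `𝔽₂`. -/
abbrev F2 : Type := ZMod 2

/-- The second differential of the hypergraph-product complex:
`D₂(X) = (H₁ * X, X * H₂ᵀ)`. -/
def D2 {m₁ n₁ m₂ n₂ : ℕ} (H₁ : Matrix (Fin m₁) (Fin n₁) F2)
    (H₂ : Matrix (Fin m₂) (Fin n₂) F2) :
    Matrix (Fin n₁) (Fin n₂) F2 →ₗ[F2]
      Matrix (Fin m₁) (Fin n₂) F2 × Matrix (Fin n₁) (Fin m₂) F2 where
  toFun X := (H₁ * X, X * H₂ᵀ)
  map_add' X Y := by simp [Matrix.mul_add, Matrix.add_mul, Prod.ext_iff]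
  map_smul' r X := by simp [Matrix.mul_smul, Matrix.smul_mul, Prod.ext_iff]

/-- The first differential of the hypergraph-product complex:
`D₁(U, W) = U * H₂ᵀ + H₁ * W`. -/
def D1 {m₁ n₁ m₂ n₂ : ℕ} (H₁ : Matrix (Fin m₁) (Fin n₁) F2)
    (H₂ : Matrix (Fin m₂) (Fin n₂) F2) :
    Matrix (Fin m₁) (Fin n₂) F2 × Matrix (Fin n₁) (Fin m₂) F2 →ₗ[F2]
      Matrix (Fin m₁) (Fin m₂) F2 where
  toFun P := P.1 * H₂ᵀ + H₁ * P.2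
  map_add' P Q := by
    simp only [Prod.fst_add, Prod.snd_add, Matrix.add_mul, Matrix.mul_add]
    abel
  map_smul' r P := by
    simp [Matrix.smul_mul, Matrix.mul_smul, smul_add]

/-- Submodule of matrices supported where `p` holds. -/
def suppM (a b : ℕ) (p : Fin a → Fin b → Prop) [∀ i j, Decidable (p i j)] :
    Submodule F2 (Matrix (Fin a) (Fin b) F2) where
  carrier := {M | ∀ i j, ¬ p i j → M i j = 0}
  add_mem' := by intro x y hx hy i j h; simp [Matrix.add_apply, hx i j h, hy i j h]
  zero_mem' := by intro i j h; rfl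
  smul_mem' := by intro c x hx i j h; simp [Matrix.smul_apply, hx i j h]

lemma mem_suppM {a b : ℕ} {p : Fin a → Fin b → Prop} [∀ i j, Decidable (p i j)]
    {M : Matrix (Fin a) (Fin b) F2} :
    M ∈ suppM a b p ↔ ∀ i j, ¬ p i j → M i j = 0 := Iff.rfl

def suppMEquiv (a b : ℕ) (p : Fin a → Fin b → Prop) [∀ i j, Decidable (p i j)] :
    suppM a b p ≃ₗ[F2] ({x : Fin a × Fin b // p x.1 x.2} → F2) where
  toFun M := fun x => M.1 x.1.1 x.1.2
  map_add' _ _ := rfl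
  map_smul' _ _ := rfl
  invFun g := ⟨fun i j => if h : p i j then g ⟨(i, j), h⟩ else 0, by
    intro i j h; simp [h]⟩
  left_inv := by
    rintro ⟨M, hM⟩
    ext i j
    by_cases h : p i j <;> simp [h, hM i j]
  right_inv := by
    intro g; funext x; obtain ⟨⟨i, j⟩, h⟩ := x; simp [h]

lemma finrank_suppM (a b : ℕ) (p : Fin a → Fin b → Prop) [∀ i j, Decidable (p i j)] :
    Module.finrank F2 (suppM a b p) = Fintype.card {x : Fin a × Fin b // p x.1 x.2} := by
  rw [(suppMEquiv a b p).finrank_eq, Module.finrank_fintype_fun_eq_card]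

lemma card_le_subtype (n r : ℕ) (hr : r ≤ n) :
    Fintype.card {i : Fin n // r ≤ (i : ℕ)} = n - r := by
  have e : {i : Fin n // r ≤ (i : ℕ)} ≃ Fin (n - r) :=
    { toFun := fun i => ⟨(i : ℕ) - r, by omega⟩
      invFun := fun j => ⟨⟨r + (j : ℕ), by omega⟩, by simp⟩
      left_inv := by rintro ⟨⟨i, hi⟩, h⟩; ext; simp at h ⊢; omega
      right_inv := by rintro ⟨j, hj⟩; ext; simp }
  rw [Fintype.card_congr e, Fintype.card_fin]

lemma card_and (a b r₁ r₂ : ℕ) (h1 : r₁ ≤ a) (h2 : r₂ ≤ b) :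
    Fintype.card {x : Fin a × Fin b // r₁ ≤ (x.1 : ℕ) ∧ r₂ ≤ (x.2 : ℕ)}
      = (a - r₁) * (b - r₂) := by
  rw [Fintype.card_congr (Equiv.subtypeProdEquivProd (p := fun i : Fin a => r₁ ≤ (i : ℕ)) (q := fun j : Fin b => r₂ ≤ (j : ℕ))), Fintype.card_prod,
    card_le_subtype a r₁ h1, card_le_subtype b r₂ h2]

/-- Standard rank-`r` matrix. -/
def stdE (m n r : ℕ) : Matrix (Fin m) (Fin n) F2 :=
  fun i j => if (i : ℕ) = (j : ℕ) ∧ (i : ℕ) < r then 1 else 0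

lemma stdE_mul_apply {m n r : ℕ} (hr : r ≤ n) {b : ℕ} (X : Matrix (Fin n) (Fin b) F2)
    (i : Fin m) (j : Fin b) :
    (stdE m n r * X) i j
      = if h : (i : ℕ) < r then X ⟨i, lt_of_lt_of_le h hr⟩ j else 0 := by
  rw [Matrix.mul_apply]
  by_cases h : (i : ℕ) < r
  · rw [dif_pos h, Finset.sum_eq_single (⟨(i : ℕ), lt_of_lt_of_le h hr⟩ : Fin n)]
    · simp [stdE, h]
    · intro k _ hk
      have : ¬((i : ℕ) = (k : ℕ) ∧ (i : ℕ) < r) := by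
        rintro ⟨h1, -⟩; exact hk (by ext; simp [← h1])
      simp [stdE, this]
    · intro h'; exact absurd (Finset.mem_univ _) h'
  · rw [dif_neg h]
    apply Finset.sum_eq_zero
    intro k _
    simp [stdE, h]

lemma mul_stdE_transpose_apply {m n r : ℕ} (hr : r ≤ n) {a : ℕ}
    (X : Matrix (Fin a) (Fin n) F2) (i : Fin a) (j : Fin m) :
    (X * (stdE m n r)ᵀ) i j
      = if h : (j : ℕ) < r then X i ⟨j, lt_of_lt_of_le h hr⟩ else 0 := by
  rw [Matrix.mul_apply]
  by_cases h : (j : ℕ) < r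
  · rw [dif_pos h, Finset.sum_eq_single (⟨(j : ℕ), lt_of_lt_of_le h hr⟩ : Fin n)]
    · simp [stdE, h]
    · intro k _ hk
      have : ¬((j : ℕ) = (k : ℕ) ∧ (j : ℕ) < r) := by
        rintro ⟨h1, -⟩; exact hk (by ext; simp [← h1])
      simp [stdE, Matrix.transpose_apply, this]
    · intro h'; exact absurd (Finset.mem_univ _) h'
  · rw [dif_neg h]
    apply Finset.sum_eq_zero
    intro k _
    simp [stdE, Matrix.transpose_apply, h]

lemma ker_D2_stdE {m₁ n₁ m₂ n₂ r₁ r₂ : ℕ}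
    (h1m : r₁ ≤ m₁) (h1n : r₁ ≤ n₁) (h2m : r₂ ≤ m₂) (h2n : r₂ ≤ n₂) :
    LinearMap.ker (D2 (stdE m₁ n₁ r₁) (stdE m₂ n₂ r₂))
      = suppM n₁ n₂ (fun i j => r₁ ≤ (i : ℕ) ∧ r₂ ≤ (j : ℕ)) := by
  ext X
  rw [LinearMap.mem_ker, mem_suppM]
  constructor
  · intro hX i j hp
    push_neg at hp
    have e1 : stdE m₁ n₁ r₁ * X = 0 := congrArg Prod.fst hX
    have e2 : X * (stdE m₂ n₂ r₂)ᵀ = 0 := congrArg Prod.snd hX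
    by_cases hi : (i : ℕ) < r₁
    · have := congrFun (congrFun e1 ⟨(i : ℕ), lt_of_lt_of_le hi h1m⟩) j
      rw [stdE_mul_apply h1n] at this
      simpa [hi] using this
    · have hj : (j : ℕ) < r₂ := hp (by omega)
      have := congrFun (congrFun e2 i) ⟨(j : ℕ), lt_of_lt_of_le hj h2m⟩
      rw [mul_stdE_transpose_apply h2n] at this
      simpa [hj] using this
  · intro hX
    have e1 : stdE m₁ n₁ r₁ * X = 0 := by
      ext i j
      rw [stdE_mul_apply h1n]
      split
      · exact hX _ _ (by simp; omega)
      · rfl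
    have e2 : X * (stdE m₂ n₂ r₂)ᵀ = 0 := by
      ext i j
      rw [mul_stdE_transpose_apply h2n]
      split
      · exact hX _ _ (by simp; omega)
      · rfl
    show (_, _) = (0 : _ × _)
    rw [e1, e2]; rfl

lemma range_D1_stdE {m₁ n₁ m₂ n₂ r₁ r₂ : ℕ}
    (h1m : r₁ ≤ m₁) (h1n : r₁ ≤ n₁) (h2m : r₂ ≤ m₂) (h2n : r₂ ≤ n₂) :
    LinearMap.range (D1 (stdE m₁ n₁ r₁) (stdE m₂ n₂ r₂))
      = suppM m₁ m₂ (fun i j => (i : ℕ) < r₁ ∨ (j : ℕ) < r₂) := by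
  ext M
  rw [LinearMap.mem_range, mem_suppM]
  constructor
  · rintro ⟨⟨U, W⟩, rfl⟩ i j hp
    push_neg at hp
    show (U * (stdE m₂ n₂ r₂)ᵀ + stdE m₁ n₁ r₁ * W) i j = 0
    rw [Matrix.add_apply, mul_stdE_transpose_apply h2n, stdE_mul_apply h1n]
    rw [dif_neg (by omega), dif_neg (by omega)]
    rfl
  · intro hM
    refine ⟨(fun i j => if h : (j : ℕ) < r₂ then M i ⟨(j : ℕ), lt_of_lt_of_le h h2m⟩ else 0,
      fun k j => if h : (k : ℕ) < r₁ ∧ r₂ ≤ (j : ℕ)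
        then M ⟨(k : ℕ), lt_of_lt_of_le h.1 h1m⟩ j else 0), ?_⟩
    show ((_ : Matrix (Fin m₁) (Fin n₂) F2) * (stdE m₂ n₂ r₂)ᵀ + stdE m₁ n₁ r₁ * (_ : Matrix (Fin n₁) (Fin m₂) F2)) = M
    ext i j
    rw [Matrix.add_apply, mul_stdE_transpose_apply h2n, stdE_mul_apply h1n]
    by_cases hj : (j : ℕ) < r₂ <;> by_cases hi : (i : ℕ) < r₁
    · have h2 : ¬((i : ℕ) < r₁ ∧ r₂ ≤ (j : ℕ)) := by omega
      simp [hj, hi, h2]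
    · simp [hj, hi]
    · have h2 : (i : ℕ) < r₁ ∧ r₂ ≤ (j : ℕ) := ⟨hi, by omega⟩
      simp [hj, hi, h2]
    · simp [hj, hi, hM i j (by omega)]

lemma mul_stdE_apply {m n r : ℕ} (hr : r ≤ m) {a : ℕ}
    (X : Matrix (Fin a) (Fin m) F2) (i : Fin a) (j : Fin n) :
    (X * stdE m n r) i j
      = if h : (j : ℕ) < r then X i ⟨j, lt_of_lt_of_le h hr⟩ else 0 := by
  rw [Matrix.mul_apply]
  by_cases h : (j : ℕ) < r
  · rw [dif_pos h, Finset.sum_eq_single (⟨(j : ℕ), lt_of_lt_of_le h hr⟩ : Fin m)]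
    · simp [stdE, h]
    · intro k _ hk
      have : ¬((k : ℕ) = (j : ℕ) ∧ (k : ℕ) < r) := by
        rintro ⟨h1, -⟩; exact hk (by ext; simp [h1])
      simp [stdE, this]
    · intro h'; exact absurd (Finset.mem_univ _) h'
  · rw [dif_neg h]
    apply Finset.sum_eq_zero
    intro k _
    have : ¬((k : ℕ) = (j : ℕ) ∧ (k : ℕ) < r) := by omega
    simp [stdE, this]

set_option maxHeartbeats 2000000 in
lemma exists_normal_form {m n : ℕ} (H : Matrix (Fin m) (Fin n) F2) :
    ∃ (P P' : Matrix (Fin m) (Fin m) F2) (Q Q' : Matrix (Fin n) (Fin n) F2),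
      P * P' = 1 ∧ P' * P = 1 ∧ Q * Q' = 1 ∧ Q' * Q = 1 ∧
      H = P * stdE m n H.rank * Q := by
  classical
  set r := H.rank with hrdef
  have hrm : r ≤ m := H.rank_le_height
  have hrn : r ≤ n := H.rank_le_width
  set f := H.mulVecLin with hfdef
  set K := LinearMap.ker f with hKdef
  obtain ⟨C, hC⟩ := Submodule.exists_isCompl K
  obtain ⟨D, hD⟩ := Submodule.exists_isCompl (LinearMap.range f)
  have hrange : Module.finrank F2 (LinearMap.range f) = r := rfl
  have hdomain : Module.finrank F2 (Fin n → F2) = n := by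
    rw [Module.finrank_fintype_fun_eq_card, Fintype.card_fin]
  have hcodomain : Module.finrank F2 (Fin m → F2) = m := by
    rw [Module.finrank_fintype_fun_eq_card, Fintype.card_fin]
  have hrn' := LinearMap.finrank_range_add_finrank_ker f
  rw [hdomain, hrange, ← hKdef] at hrn'
  have hKC := Submodule.finrank_add_eq_of_isCompl hC
  rw [hdomain] at hKC
  have hK : Module.finrank F2 K = n - r := by omega
  have hCr : Module.finrank F2 C = r := by omega
  have hRD := Submodule.finrank_add_eq_of_isCompl hD
  rw [hcodomain, hrange] at hRD
  have hDr : Module.finrank F2 D = m - r := by omega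
  have hsub : ∀ c : C, f (c : Fin n → F2) ∈ LinearMap.range f :=
    fun c => LinearMap.mem_range_self f (c : Fin n → F2)
  set g0 : C →ₗ[F2] LinearMap.range f :=
    (f.domRestrict C).codRestrict (LinearMap.range f) hsub with hg0def
  have hg0inj : Function.Injective g0 := by
    rw [← LinearMap.ker_eq_bot, Submodule.eq_bot_iff]
    rintro ⟨x, hxC⟩ hx
    have hfx : f x = 0 := by
      have := congrArg (Subtype.val) hx
      exact this
    have : x ∈ K ⊓ C := ⟨hfx, hxC⟩
    rw [hC.inf_eq_bot] at this
    simpa using this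
  have hg0surj : Function.Surjective g0 := by
    rintro ⟨y, hy⟩
    obtain ⟨x, rfl⟩ := hy
    have hx : x ∈ K ⊔ C := by rw [hC.sup_eq_top]; trivial
    obtain ⟨k, hk, c, hc, rfl⟩ := Submodule.mem_sup.mp hx
    refine ⟨⟨c, hc⟩, ?_⟩
    apply Subtype.ext
    have hfk : f k = 0 := hk
    simp [hg0def, map_add, hfk]
    rfl
  set g : C ≃ₗ[F2] LinearMap.range f := LinearEquiv.ofBijective g0 ⟨hg0inj, hg0surj⟩
    with hgdef
  have hg_apply : ∀ c : C, ((g c : LinearMap.range f) : Fin m → F2)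
      = f (c : Fin n → F2) := fun c => rfl
  obtain ⟨bC, hbC⟩ : ∃ b : Module.Basis (Fin r) F2 C,
      b = (Module.finBasis F2 C).reindex (finCongr hCr) := ⟨_, rfl⟩
  obtain ⟨bK, hbK⟩ : ∃ b : Module.Basis (Fin (n - r)) F2 K,
      b = (Module.finBasis F2 K).reindex (finCongr hK) := ⟨_, rfl⟩
  obtain ⟨bR, hbR⟩ : ∃ b : Module.Basis (Fin r) F2 (LinearMap.range f), b = bC.map g := ⟨_, rfl⟩
  obtain ⟨bD, hbD⟩ : ∃ b : Module.Basis (Fin (m - r)) F2 D,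
      b = (Module.finBasis F2 D).reindex (finCongr hDr) := ⟨_, rfl⟩
  have hnn : r + (n - r) = n := by omega
  have hmm : r + (m - r) = m := by omega
  obtain ⟨bV, hbV⟩ : ∃ b : Module.Basis (Fin n) F2 (Fin n → F2),
      b = ((bC.prod bK).map (Submodule.prodEquivOfIsCompl C K hC.symm)).reindex
        (finSumFinEquiv.trans (finCongr hnn)) := ⟨_, rfl⟩
  obtain ⟨bW, hbW⟩ : ∃ b : Module.Basis (Fin m) F2 (Fin m → F2),
      b = ((bR.prod bD).map (Submodule.prodEquivOfIsCompl (LinearMap.range f) D hD)).reindex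
        (finSumFinEquiv.trans (finCongr hmm)) := ⟨_, rfl⟩
  have hbW_apply : ∀ (c : Fin r) (hc : (c : ℕ) < m), bW ⟨(c : ℕ), hc⟩
      = ((bR c : LinearMap.range f) : Fin m → F2) := by
    intro c hc
    rw [hbW, Module.Basis.reindex_apply]
    have e1 : (finSumFinEquiv.trans (finCongr hmm)).symm ⟨(c : ℕ), hc⟩
        = Sum.inl c := by
      rw [Equiv.symm_apply_eq]
      ext
      simp [finSumFinEquiv_apply_left]
    rw [e1, Module.Basis.map_apply, Module.Basis.prod_apply, Sum.elim_inl]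
    simp
  have key : ∀ j : Fin n, f (bV j)
      = if h : (j : ℕ) < r then bW ⟨(j : ℕ), lt_of_lt_of_le h hrm⟩ else 0 := by
    intro j
    rw [hbV, Module.Basis.reindex_apply]
    by_cases h : (j : ℕ) < r
    · rw [dif_pos h]
      have e1 : (finSumFinEquiv.trans (finCongr hnn)).symm j
          = Sum.inl ⟨(j : ℕ), h⟩ := by
        rw [Equiv.symm_apply_eq]
        ext
        simp [finSumFinEquiv_apply_left]
      rw [e1, Module.Basis.map_apply, Module.Basis.prod_apply, Sum.elim_inl]
      rw [hbW_apply ⟨(j : ℕ), h⟩ (lt_of_lt_of_le h hrm)]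
      rw [hbR, Module.Basis.map_apply, hg_apply]
      congr 1
      simp
    · rw [dif_neg h]
      have e1 : (finSumFinEquiv.trans (finCongr hnn)).symm j
          = Sum.inr ⟨(j : ℕ) - r, by omega⟩ := by
        rw [Equiv.symm_apply_eq]
        ext
        simp [finSumFinEquiv_apply_right]
        omega
      rw [e1, Module.Basis.map_apply, Module.Basis.prod_apply, Sum.elim_inr]
      have hker : f ((bK ⟨(j : ℕ) - r, by omega⟩ : K) : Fin n → F2) = 0 :=
        (bK ⟨(j : ℕ) - r, by omega⟩).2
      simpa using hker
  -- assemble the matrices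
  set Pmat : Matrix (Fin m) (Fin m) F2 := (Pi.basisFun F2 (Fin m)).toMatrix bW with hPm
  set Qi : Matrix (Fin n) (Fin n) F2 := (Pi.basisFun F2 (Fin n)).toMatrix bV with hQm
  haveI : Invertible Pmat := (Pi.basisFun F2 (Fin m)).invertibleToMatrix bW
  haveI : Invertible Qi := (Pi.basisFun F2 (Fin n)).invertibleToMatrix bV
  have hPentry : ∀ i j, Pmat i j = bW j i := by
    intro i j; rw [hPm, Module.Basis.toMatrix_apply, Pi.basisFun_repr]
  have hQentry : ∀ i j, Qi i j = bV j i := by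
    intro i j; rw [hQm, Module.Basis.toMatrix_apply, Pi.basisFun_repr]
  have main : H * Qi = Pmat * stdE m n r := by
    ext i j
    rw [mul_stdE_apply hrm, Matrix.mul_apply]
    have lhs : ∑ k, H i k * Qi k j = f (bV j) i := by
      simp only [hfdef, Matrix.mulVecLin_apply, Matrix.mulVec, dotProduct]
      exact Finset.sum_congr rfl fun k _ => by rw [hQentry k j]
    rw [lhs, key j]
    by_cases h : (j : ℕ) < r
    · rw [dif_pos h, dif_pos h, hPentry]
    · rw [dif_neg h, dif_neg h]
      rfl
  refine ⟨Pmat, ⅟Pmat, ⅟Qi, Qi, mul_invOf_self _, invOf_mul_self _,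
    invOf_mul_self _, mul_invOf_self _, ?_⟩
  calc H = H * (Qi * ⅟Qi) := by rw [mul_invOf_self, Matrix.mul_one]
    _ = (H * Qi) * ⅟Qi := by rw [Matrix.mul_assoc]
    _ = Pmat * stdE m n r * ⅟Qi := by rw [main]

/-- Conjugation by invertible matrices as a linear equivalence. -/
def conjEquiv {a b c d : ℕ} (A : Matrix (Fin c) (Fin a) F2) (A' : Matrix (Fin a) (Fin c) F2)
    (B : Matrix (Fin b) (Fin d) F2) (B' : Matrix (Fin d) (Fin b) F2)
    (hA : A * A' = 1) (hA' : A' * A = 1) (hB : B * B' = 1) (hB' : B' * B = 1) :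
    Matrix (Fin a) (Fin b) F2 ≃ₗ[F2] Matrix (Fin c) (Fin d) F2 where
  toFun X := A * X * B
  invFun Y := A' * Y * B'
  map_add' X Y := by simp [Matrix.mul_add, Matrix.add_mul]
  map_smul' r X := by simp [Matrix.mul_smul, Matrix.smul_mul]
  left_inv X := by
    simp only [← Matrix.mul_assoc]
    rw [hA', Matrix.one_mul, Matrix.mul_assoc, hB, Matrix.mul_one]
  right_inv Y := by
    simp only [← Matrix.mul_assoc]
    rw [hA, Matrix.one_mul, Matrix.mul_assoc, hB', Matrix.mul_one]

lemma conjEquiv_apply {a b c d : ℕ} (A : Matrix (Fin c) (Fin a) F2)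
    (A' : Matrix (Fin a) (Fin c) F2) (B : Matrix (Fin b) (Fin d) F2)
    (B' : Matrix (Fin d) (Fin b) F2) (hA : A * A' = 1) (hA' : A' * A = 1)
    (hB : B * B' = 1) (hB' : B' * B = 1) (X : Matrix (Fin a) (Fin b) F2) :
    conjEquiv A A' B B' hA hA' hB hB' X = A * X * B := rfl

set_option maxHeartbeats 1600000 in
set_option synthInstance.maxHeartbeats 1000000 in
/-- **Künneth dimension count for the 2D hypergraph-product code (Lemmas 5, 6, 12).**
`D₁ ∘ D₂ = 0`, and the homology dimensions of the product complex are
`dim ker D₂ = (n₁−r₁)(n₂−r₂)`,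
`dim (ker D₁ / range D₂) = (n₁−r₁)(m₂−r₂) + (m₁−r₁)(n₂−r₂)`  (the number of logical
qubits of the 2D hypergraph-product code), and
`dim (coker D₁) = (m₁−r₁)(m₂−r₂)`, where `rᵢ = rank Hᵢ`. -/
theorem hypergraph_product_kunneth_dimensions
    {m₁ n₁ m₂ n₂ : ℕ} (H₁ : Matrix (Fin m₁) (Fin n₁) F2)
    (H₂ : Matrix (Fin m₂) (Fin n₂) F2) :
    (D1 H₁ H₂).comp (D2 H₁ H₂) = 0 ∧
    Module.finrank F2 (LinearMap.ker (D2 H₁ H₂))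
      = (n₁ - H₁.rank) * (n₂ - H₂.rank) ∧
    Module.finrank F2
      (↥(LinearMap.ker (D1 H₁ H₂)) ⧸
        Submodule.comap (LinearMap.ker (D1 H₁ H₂)).subtype
          (LinearMap.range (D2 H₁ H₂)))
      = (n₁ - H₁.rank) * (m₂ - H₂.rank) + (m₁ - H₁.rank) * (n₂ - H₂.rank) ∧
    Module.finrank F2
      ((Matrix (Fin m₁) (Fin m₂) F2) ⧸ LinearMap.range (D1 H₁ H₂))
      = (m₁ - H₁.rank) * (m₂ - H₂.rank) := by

  classical
  have h1m : H₁.rank ≤ m₁ := H₁.rank_le_height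
  have h1n : H₁.rank ≤ n₁ := H₁.rank_le_width
  have h2m : H₂.rank ≤ m₂ := H₂.rank_le_height
  have h2n : H₂.rank ≤ n₂ := H₂.rank_le_width
  obtain ⟨P₁, P₁', Q₁, Q₁', hPP₁, hP'P₁, hQQ₁, hQ'Q₁, hH₁⟩ := exists_normal_form H₁
  obtain ⟨P₂, P₂', Q₂, Q₂', hPP₂, hP'P₂, hQQ₂, hQ'Q₂, hH₂⟩ := exists_normal_form H₂
  set r₁ := H₁.rank with hr₁
  set r₂ := H₂.rank with hr₂
  set E₁ := stdE m₁ n₁ r₁ with hE₁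
  set E₂ := stdE m₂ n₂ r₂ with hE₂
  -- the composite vanishes (characteristic two)
  have hcomp : (D1 H₁ H₂).comp (D2 H₁ H₂) = 0 := by
    apply LinearMap.ext
    intro X
    show (H₁ * X) * H₂ᵀ + H₁ * (X * H₂ᵀ) = 0
    rw [Matrix.mul_assoc]
    ext i j
    simp only [Matrix.add_apply, Matrix.zero_apply]
    exact CharTwo.add_self_eq_zero _
  -- transposed unit relations
  have ht₂ : H₂ᵀ = Q₂ᵀ * E₂ᵀ * P₂ᵀ := by
    rw [hH₂, Matrix.transpose_mul, Matrix.transpose_mul, ← Matrix.mul_assoc]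
  have htQ₂ : Q₂ᵀ * Q₂'ᵀ = 1 := by
    rw [← Matrix.transpose_mul, hQ'Q₂, Matrix.transpose_one]
  have htQ₂' : Q₂'ᵀ * Q₂ᵀ = 1 := by
    rw [← Matrix.transpose_mul, hQQ₂, Matrix.transpose_one]
  have htP₂ : P₂ᵀ * P₂'ᵀ = 1 := by
    rw [← Matrix.transpose_mul, hP'P₂, Matrix.transpose_one]
  have htP₂' : P₂'ᵀ * P₂ᵀ = 1 := by
    rw [← Matrix.transpose_mul, hPP₂, Matrix.transpose_one]
  -- conjugating equivalences
  set Φ := conjEquiv Q₁ Q₁' Q₂ᵀ Q₂'ᵀ hQQ₁ hQ'Q₁ htQ₂ htQ₂' with hΦ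
  set Ψ₁ := conjEquiv P₁' P₁ Q₂ᵀ Q₂'ᵀ hP'P₁ hPP₁ htQ₂ htQ₂' with hΨ₁
  set Ψ₂ := conjEquiv Q₁ Q₁' P₂'ᵀ P₂ᵀ hQQ₁ hQ'Q₁ htP₂' htP₂ with hΨ₂
  set Θ := conjEquiv P₁' P₁ P₂'ᵀ P₂ᵀ hP'P₁ hPP₁ htP₂' htP₂ with hΘ
  set Ψ := Ψ₁.prodCongr Ψ₂ with hΨ
  -- intertwining relations
  have hD2 : Ψ.toLinearMap.comp (D2 H₁ H₂) = (D2 E₁ E₂).comp Φ.toLinearMap := by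
    apply LinearMap.ext
    intro X
    have c1 : P₁' * (H₁ * X) * Q₂ᵀ = E₁ * (Q₁ * X * Q₂ᵀ) := by
      rw [hH₁]
      calc P₁' * (P₁ * E₁ * Q₁ * X) * Q₂ᵀ
          = P₁' * P₁ * (E₁ * (Q₁ * X * Q₂ᵀ)) := by simp only [Matrix.mul_assoc]
        _ = E₁ * (Q₁ * X * Q₂ᵀ) := by rw [hP'P₁, Matrix.one_mul]
    have c2 : Q₁ * (X * H₂ᵀ) * P₂'ᵀ = Q₁ * X * Q₂ᵀ * E₂ᵀ := by
      rw [ht₂]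
      calc Q₁ * (X * (Q₂ᵀ * E₂ᵀ * P₂ᵀ)) * P₂'ᵀ
          = Q₁ * X * Q₂ᵀ * E₂ᵀ * (P₂ᵀ * P₂'ᵀ) := by simp only [Matrix.mul_assoc]
        _ = Q₁ * X * Q₂ᵀ * E₂ᵀ := by rw [htP₂, Matrix.mul_one]
    show (P₁' * (H₁ * X) * Q₂ᵀ, Q₁ * (X * H₂ᵀ) * P₂'ᵀ)
        = (E₁ * (Q₁ * X * Q₂ᵀ), Q₁ * X * Q₂ᵀ * E₂ᵀ)
    rw [c1, c2]
  have hD1 : Θ.toLinearMap.comp (D1 H₁ H₂) = (D1 E₁ E₂).comp Ψ.toLinearMap := by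
    apply LinearMap.ext
    rintro ⟨U, W⟩
    have c3 : P₁' * (U * H₂ᵀ) * P₂'ᵀ = P₁' * U * Q₂ᵀ * E₂ᵀ := by
      rw [ht₂]
      calc P₁' * (U * (Q₂ᵀ * E₂ᵀ * P₂ᵀ)) * P₂'ᵀ
          = P₁' * U * Q₂ᵀ * E₂ᵀ * (P₂ᵀ * P₂'ᵀ) := by simp only [Matrix.mul_assoc]
        _ = P₁' * U * Q₂ᵀ * E₂ᵀ := by rw [htP₂, Matrix.mul_one]
    have c4 : P₁' * (H₁ * W) * P₂'ᵀ = E₁ * (Q₁ * W * P₂'ᵀ) := by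
      rw [hH₁]
      calc P₁' * (P₁ * E₁ * Q₁ * W) * P₂'ᵀ
          = P₁' * P₁ * (E₁ * (Q₁ * W * P₂'ᵀ)) := by simp only [Matrix.mul_assoc]
        _ = E₁ * (Q₁ * W * P₂'ᵀ) := by rw [hP'P₁, Matrix.one_mul]
    show P₁' * (U * H₂ᵀ + H₁ * W) * P₂'ᵀ
        = (P₁' * U * Q₂ᵀ) * E₂ᵀ + E₁ * (Q₁ * W * P₂'ᵀ)
    rw [Matrix.mul_add, Matrix.add_mul, c3, c4]
  -- transfer of kernel of D2
  have hker2eq : Submodule.comap Φ.toLinearMap (LinearMap.ker (D2 E₁ E₂))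
      = LinearMap.ker (D2 H₁ H₂) := by
    rw [← LinearMap.ker_comp, ← hD2]
    exact LinearMap.ker_comp_of_ker_eq_bot _
      (LinearMap.ker_eq_bot_of_injective Ψ.injective)
  have hfr_ker2 : Module.finrank F2 (LinearMap.ker (D2 H₁ H₂))
      = (n₁ - r₁) * (n₂ - r₂) := by
    rw [← hker2eq, (Φ.ofSubmodule' _).finrank_eq,
      ker_D2_stdE h1m h1n h2m h2n, finrank_suppM, card_and n₁ n₂ r₁ r₂ h1n h2n]
  -- transfer of range of D1
  have hrange1eq : Submodule.map Θ.toLinearMap (LinearMap.range (D1 H₁ H₂))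
      = LinearMap.range (D1 E₁ E₂) := by
    rw [← LinearMap.range_comp, hD1]
    exact LinearMap.range_comp_of_range_eq_top _ Ψ.range
  have hfr_range1 : Module.finrank F2 (LinearMap.range (D1 H₁ H₂))
      = m₁ * m₂ - (m₁ - r₁) * (m₂ - r₂) := by
    rw [← LinearEquiv.finrank_map_eq Θ, hrange1eq,
      range_D1_stdE h1m h1n h2m h2n, finrank_suppM,
      Fintype.card_congr (Equiv.subtypeEquivRight
        (q := fun x : Fin m₁ × Fin m₂ => ¬(r₁ ≤ (x.1 : ℕ) ∧ r₂ ≤ (x.2 : ℕ)))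
        (fun x => by omega)),
      Fintype.card_subtype_compl, card_and m₁ m₂ r₁ r₂ h1m h2m,
      Fintype.card_prod, Fintype.card_fin, Fintype.card_fin]
  -- rank-nullity bookkeeping
  obtain ⟨k₁, hk₁⟩ : ∃ k, n₁ - r₁ = k := ⟨_, rfl⟩
  obtain ⟨k₂, hk₂⟩ : ∃ k, n₂ - r₂ = k := ⟨_, rfl⟩
  obtain ⟨l₁, hl₁⟩ : ∃ l, m₁ - r₁ = l := ⟨_, rfl⟩
  obtain ⟨l₂, hl₂⟩ : ∃ l, m₂ - r₂ = l := ⟨_, rfl⟩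
  have hn₁ : n₁ = r₁ + k₁ := by omega
  have hn₂ : n₂ = r₂ + k₂ := by omega
  have hm₁ : m₁ = r₁ + l₁ := by omega
  have hm₂ : m₂ = r₂ + l₂ := by omega
  have e2 := LinearMap.finrank_range_add_finrank_ker (D2 H₁ H₂)
  rw [hfr_ker2, Module.finrank_matrix, Fintype.card_fin, Fintype.card_fin] at e2
  simp only [Module.finrank_self, mul_one] at e2
  rw [hk₁, hk₂] at e2
  have hnn : n₁ * n₂ = (r₁ * r₂ + r₁ * k₂ + k₁ * r₂) + k₁ * k₂ := by
    rw [hn₁, hn₂]; ring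
  rw [hnn] at e2
  have hR2 : Module.finrank F2 (LinearMap.range (D2 H₁ H₂))
      = r₁ * r₂ + r₁ * k₂ + k₁ * r₂ := Nat.add_right_cancel e2
  have hmm' : m₁ * m₂ = (r₁ * r₂ + r₁ * l₂ + l₁ * r₂) + l₁ * l₂ := by
    rw [hm₁, hm₂]; ring
  have hR1 : Module.finrank F2 (LinearMap.range (D1 H₁ H₂))
      = r₁ * r₂ + r₁ * l₂ + l₁ * r₂ := by
    rw [hfr_range1, hl₁, hl₂, hmm', Nat.add_sub_cancel]
  have e1 := LinearMap.finrank_range_add_finrank_ker (D1 H₁ H₂)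
  rw [Module.finrank_prod, Module.finrank_matrix, Module.finrank_matrix,
    Fintype.card_fin, Fintype.card_fin, Fintype.card_fin, Fintype.card_fin] at e1
  simp only [Module.finrank_self, mul_one] at e1
  rw [hR1] at e1
  have htot : m₁ * n₂ + n₁ * m₂
      = (r₁ * r₂ + r₁ * l₂ + l₁ * r₂)
        + ((l₁ * k₂ + k₁ * l₂) + (r₁ * r₂ + r₁ * k₂ + k₁ * r₂)) := by
    rw [hm₁, hm₂, hn₁, hn₂]; ring
  rw [htot] at e1
  have hK1 : Module.finrank F2 (LinearMap.ker (D1 H₁ H₂))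
      = (l₁ * k₂ + k₁ * l₂) + (r₁ * r₂ + r₁ * k₂ + k₁ * r₂) := Nat.add_left_cancel e1
  -- the middle homology
  have hle : LinearMap.range (D2 H₁ H₂) ≤ LinearMap.ker (D1 H₁ H₂) := by
    rintro x ⟨y, rfl⟩
    rw [LinearMap.mem_ker, ← LinearMap.comp_apply, hcomp]
    rfl
  have ecomap : Module.finrank F2
      (Submodule.comap (LinearMap.ker (D1 H₁ H₂)).subtype (LinearMap.range (D2 H₁ H₂)))
      = Module.finrank F2 (LinearMap.range (D2 H₁ H₂)) :=
    (Submodule.comapSubtypeEquivOfLe hle).finrank_eq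
  have e3 := Submodule.finrank_quotient_add_finrank
    (Submodule.comap (LinearMap.ker (D1 H₁ H₂)).subtype (LinearMap.range (D2 H₁ H₂)))
  rw [ecomap, hR2, hK1] at e3
  have hmid : Module.finrank F2
      (↥(LinearMap.ker (D1 H₁ H₂)) ⧸
        Submodule.comap (LinearMap.ker (D1 H₁ H₂)).subtype (LinearMap.range (D2 H₁ H₂)))
      = l₁ * k₂ + k₁ * l₂ := Nat.add_right_cancel e3
  -- the cokernel
  have e4 := Submodule.finrank_quotient_add_finrank (LinearMap.range (D1 H₁ H₂))
  rw [hR1, Module.finrank_matrix, Fintype.card_fin, Fintype.card_fin] at e4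
  simp only [Module.finrank_self, mul_one] at e4
  have hmm'' : m₁ * m₂ = l₁ * l₂ + (r₁ * r₂ + r₁ * l₂ + l₁ * r₂) := by
    rw [hm₁, hm₂]; ring
  rw [hmm''] at e4
  have hcok : Module.finrank F2
      ((Matrix (Fin m₁) (Fin m₂) F2) ⧸ LinearMap.range (D1 H₁ H₂))
      = l₁ * l₂ := Nat.add_right_cancel e4
  refine ⟨hcomp, hfr_ker2, ?_, ?_⟩
  · rw [hmid, hk₁, hk₂, hl₁, hl₂]
    ring
  · rw [hcok, hl₁, hl₂]
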